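/- arXiv:1905.04095 — 3 statements merged into one kernel-verified Lean document; each statement's English description precedes it below -/
import Mathlib

section
/- Let f, g be analytic functions on ℝ (real-analytic, or restrictions of holomorphic functions on a strip), not identically equal, and let h : ℝ → ℂ be nowhere zero with Φ = h/|h| analytic. Suppose |g(x)| = |f(x)| and |g(x) - h(x)| = |f(x) - h(x)| for all x ∈ ℝ. Then either g = f identically or g = conj(f)·Φ² identically. -/
open Complex

theorem stmt_8 (f g : ℝ → ℂ) (h Φ : ℝ → ℂ)
    (hf : AnalyticOnNhd ℝ f Set.univ) (hg : AnalyticOnNhd ℝ g Set.univ)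
    (hne : f ≠ g)
    (hh : ∀ x : ℝ, h x ≠ 0)
    (hΦ : ∀ x : ℝ, Φ x = h x / (‖h x‖ : ℂ))
    (hΦa : AnalyticOnNhd ℝ Φ Set.univ)
    (hmod : ∀ x : ℝ, ‖g x‖ = ‖f x‖)
    (hmod' : ∀ x : ℝ, ‖g x - h x‖ = ‖f x - h x‖) :
    (∀ x : ℝ, g x = f x) ∨
    (∀ x : ℝ, g x = (starRingEnd ℂ) (f x) * (Φ x) ^ 2) := by
  -- conj ∘ f is real-analytic
  have hcf : AnalyticOnNhd ℝ (fun x => (starRingEnd ℂ) (f x)) Set.univ := by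
    have := (Complex.conjCLE : ℂ ≃L[ℝ] ℂ).toContinuousLinearMap.comp_analyticOnNhd hf
    exact this
  have hcΦ : AnalyticOnNhd ℝ (fun x => (starRingEnd ℂ) (Φ x)) Set.univ := by
    have := (Complex.conjCLE : ℂ ≃L[ℝ] ℂ).toContinuousLinearMap.comp_analyticOnNhd hΦa
    exact this
  set F1 : ℝ → ℂ := fun x => g x - f x with hF1def
  set F2 : ℝ → ℂ := fun x => g x * (starRingEnd ℂ) (Φ x) - (starRingEnd ℂ) (f x) * Φ x
    with hF2def
  have hF1 : AnalyticOnNhd ℝ F1 Set.univ := hg.sub hf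
  have hF2 : AnalyticOnNhd ℝ F2 Set.univ := (hg.mul hcΦ).sub (hcf.mul hΦa)
  -- |Φ x| = 1 and conj Φ * Φ = 1
  have hΦ1 : ∀ x, (starRingEnd ℂ) (Φ x) * Φ x = 1 := by
    intro x
    have hr : (‖h x‖ : ℂ) ≠ 0 := by
      simpa using (norm_ne_zero_iff.mpr (hh x))
    rw [hΦ x]
    rw [map_div₀]
    simp only [Complex.conj_ofReal]
    field_simp
    rw [mul_comm]
    rw [Complex.mul_conj]
    rw [← Complex.sq_norm]
    push_cast
    ring
  -- pointwise product vanishes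
  have hprod : ∀ x, F1 x * F2 x = 0 := by
    intro x
    have e1 : g x * (starRingEnd ℂ) (g x) = f x * (starRingEnd ℂ) (f x) := by
      rw [Complex.mul_conj, Complex.mul_conj, ← Complex.sq_norm, ← Complex.sq_norm, hmod x]
    have e2 : (g x - h x) * (starRingEnd ℂ) (g x - h x)
        = (f x - h x) * (starRingEnd ℂ) (f x - h x) := by
      rw [Complex.mul_conj, Complex.mul_conj, ← Complex.sq_norm, ← Complex.sq_norm, hmod' x]
    have key : g x * (starRingEnd ℂ) (h x) + (starRingEnd ℂ) (g x) * h x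
        = f x * (starRingEnd ℂ) (h x) + (starRingEnd ℂ) (f x) * h x := by
      have e2' := e2
      simp only [map_sub] at e2'
      linear_combination e1 - e2'
    -- (g - f) * (g * conj h - conj f * h) = 0
    have main : (g x - f x) * (g x * (starRingEnd ℂ) (h x) - (starRingEnd ℂ) (f x) * h x)
        = 0 := by
      linear_combination (g x) * key - (h x) * e1
    have hr : (‖h x‖ : ℂ) ≠ 0 := by
      simpa using (norm_ne_zero_iff.mpr (hh x))
    have hF2x : F2 x = (g x * (starRingEnd ℂ) (h x) - (starRingEnd ℂ) (f x) * h x)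
        / (‖h x‖ : ℂ) := by
      simp only [hF2def, hΦ x, map_div₀, Complex.conj_ofReal]
      field_simp
    rw [hF1def, hF2x]
    field_simp
    linear_combination main
  by_cases hz : ∀ x, F1 x = 0
  · left
    intro x
    have := hz x
    simpa [hF1def, sub_eq_zero] using this
  · right
    push_neg at hz
    obtain ⟨x0, hx0⟩ := hz
    -- F2 vanishes near x0
    have hev : ∀ᶠ x in nhds x0, F2 x = 0 := by
      have hc : ContinuousAt F1 x0 := (hF1 x0 (Set.mem_univ _)).continuousAt
      have hne0 : ∀ᶠ x in nhds x0, F1 x ≠ 0 := hc.eventually_ne hx0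
      filter_upwards [hne0] with x hx
      have := hprod x
      exact (mul_eq_zero.mp this).resolve_left hx
    have hfreq : ∃ᶠ x in nhdsWithin x0 {x0}ᶜ, F2 x = 0 :=
      (hev.filter_mono nhdsWithin_le_nhds).frequently
    have hall : Set.EqOn F2 0 Set.univ :=
      hF2.eqOn_zero_of_preconnected_of_frequently_eq_zero isPreconnected_univ
        (Set.mem_univ x0) hfreq
    intro x
    have h2 : F2 x = 0 := hall (Set.mem_univ x)
    have h2' : g x * (starRingEnd ℂ) (Φ x) = (starRingEnd ℂ) (f x) * Φ x := by
      simpa [hF2def, sub_eq_zero] using h2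
    have := congrArg (fun z => z * Φ x) h2'
    calc g x = g x * ((starRingEnd ℂ) (Φ x) * Φ x) := by rw [hΦ1 x]; ring
      _ = (starRingEnd ℂ) (f x) * Φ x * Φ x := by rw [← mul_assoc, this]
      _ = (starRingEnd ℂ) (f x) * Φ x ^ 2 := by ring
end

section
/- For any complex numbers a, b, c with |c| = |a| and |c - b| = |a - b|, either c = a, or c = conj(a)·b²/|b|² (when b ≠ 0); i.e., the two circles {|z| = |a|} and {|z - b| = |a - b|} intersect in at most the two points a and conj(a)b²/|b|². -/
open Complex

theorem stmt_9 (a b c : ℂ) (hb : b ≠ 0)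
    (h1 : ‖c‖ = ‖a‖)
    (h2 : ‖c - b‖ = ‖a - b‖) :
    c = a ∨ c = (starRingEnd ℂ) a * b ^ 2 / (((‖b‖ : ℝ) : ℂ)) ^ 2 := by
  have e1 : c * (starRingEnd ℂ) c = a * (starRingEnd ℂ) a := by
    have h : Complex.normSq c = Complex.normSq a := by
      rw [← Complex.sq_norm, ← Complex.sq_norm, h1]
    rw [Complex.mul_conj, Complex.mul_conj, h]
  have e2 : (c - b) * (starRingEnd ℂ) (c - b) = (a - b) * (starRingEnd ℂ) (a - b) := by
    have h : Complex.normSq (c - b) = Complex.normSq (a - b) := by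
      rw [← Complex.sq_norm, ← Complex.sq_norm, h2]
    rw [Complex.mul_conj, Complex.mul_conj, h]
  simp only [map_sub] at e2
  have key : (c - a) * (c * (starRingEnd ℂ) b - (starRingEnd ℂ) a * b) = 0 := by
    linear_combination (c - b) * e1 - c * e2
  rcases mul_eq_zero.1 key with h | h
  · left; exact sub_eq_zero.1 h
  · right
    have hb' : (starRingEnd ℂ) b ≠ 0 := by simpa using hb
    have habs : (((‖b‖ : ℝ) : ℂ)) ^ 2 = b * (starRingEnd ℂ) b := by
      rw [Complex.mul_conj, Complex.normSq_eq_norm_sq]; norm_cast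
    rw [habs]
    field_simp
    linear_combination (sub_eq_zero.1 h)
end

section
/- Let F, G be holomorphic on the unit disc, not identically zero, with |F(x)| = |G(x)| for x ∈ (-1,1) and |F(e^{iθ}x)| = |G(e^{iθ}x)| for x ∈ (-1,1), where θ/π is irrational. Then F and G have exactly the same zeros in 𝔻 (with multiplicities). -/
open Complex Metric Filter Asymptotics Set Function Topology

noncomputable def AnalyticAt.order {f : ℂ → ℂ} {w : ℂ} (_hf : AnalyticAt ℂ f w) : ℕ∞ :=
  analyticOrderAt f w

lemma AnalyticAt.order_eq_top_iff {f : ℂ → ℂ} {w : ℂ} (hf : AnalyticAt ℂ f w) :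
    hf.order = ⊤ ↔ ∀ᶠ z in 𝓝 w, f z = 0 := analyticOrderAt_eq_top

lemma AnalyticAt.order_eq_nat_iff {f : ℂ → ℂ} {w : ℂ} (hf : AnalyticAt ℂ f w) (n : ℕ) :
    hf.order = n ↔ ∃ (g : ℂ → ℂ), AnalyticAt ℂ g w ∧ g w ≠ 0 ∧
      ∀ᶠ z in 𝓝 w, f z = (z - w) ^ n • g z := hf.analyticOrderAt_eq_natCast

lemma hasDerivAt_conjComp {f : ℂ → ℂ} {f' a w : ℂ}
    (hf : HasDerivAt f f' (a * (starRingEnd ℂ) w)) :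
    HasDerivAt (fun z => (starRingEnd ℂ) (f (a * (starRingEnd ℂ) z)))
      ((starRingEnd ℂ) a * (starRingEnd ℂ) f') w := by
  rw [hasDerivAt_iff_isLittleO] at hf ⊢
  have hcont : Filter.Tendsto (fun z : ℂ => a * (starRingEnd ℂ) z) (𝓝 w)
      (𝓝 (a * (starRingEnd ℂ) w)) :=
    ((continuous_const.mul continuous_conj).tendsto w)
  have h1 := hf.comp_tendsto hcont
  have h2 : (fun z : ℂ => a * (starRingEnd ℂ) z - a * (starRingEnd ℂ) w) =O[𝓝 w]
      fun z => z - w := by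
    apply IsBigO.of_bound (‖a‖)
    filter_upwards with z
    have : a * (starRingEnd ℂ) z - a * (starRingEnd ℂ) w = a * (starRingEnd ℂ) (z - w) := by
      rw [map_sub]; ring
    rw [this]
    simp only [norm_mul, Complex.norm_conj]
    exact le_refl _
  have h3 := h1.trans_isBigO h2
  rw [← isLittleO_norm_left] at h3 ⊢
  refine h3.congr_left (fun z => Eq.symm ?_)
  have e1 : (starRingEnd ℂ) (f (a * (starRingEnd ℂ) z)) - (starRingEnd ℂ) (f (a * (starRingEnd ℂ) w))
      - (z - w) • ((starRingEnd ℂ) a * (starRingEnd ℂ) f')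
      = (starRingEnd ℂ) ((f (a * (starRingEnd ℂ) z)) - f (a * (starRingEnd ℂ) w)
        - (a * (starRingEnd ℂ) z - a * (starRingEnd ℂ) w) • f') := by
    simp only [map_sub, map_mul, smul_eq_mul, Complex.conj_conj]
    ring
  rw [e1]
  simp only [Function.comp, Complex.norm_conj, smul_eq_mul]

lemma analyticAt_conjComp {f : ℂ → ℂ} {a w : ℂ} (hf : AnalyticAt ℂ f (a * (starRingEnd ℂ) w)) :
    AnalyticAt ℂ (fun z => (starRingEnd ℂ) (f (a * (starRingEnd ℂ) z))) w := by
  obtain ⟨U, hUf, hUo, hU⟩ := _root_.eventually_nhds_iff.mp hf.eventually_analyticAt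
  have hco : Continuous (fun z : ℂ => a * (starRingEnd ℂ) z) :=
    continuous_const.mul continuous_conj
  have hVo : IsOpen ((fun z : ℂ => a * (starRingEnd ℂ) z) ⁻¹' U) := hUo.preimage hco
  have hwV : w ∈ (fun z : ℂ => a * (starRingEnd ℂ) z) ⁻¹' U := hU
  have hdiff : DifferentiableOn ℂ (fun z => (starRingEnd ℂ) (f (a * (starRingEnd ℂ) z)))
      ((fun z : ℂ => a * (starRingEnd ℂ) z) ⁻¹' U) := fun z hz =>
    (hasDerivAt_conjComp ((hUf _ hz).differentiableAt.hasDerivAt)).differentiableAt.differentiableWithinAt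
  exact hdiff.analyticAt (hVo.mem_nhds hwV)

lemma myorder_congr {f g : ℂ → ℂ} {w : ℂ} (hf : AnalyticAt ℂ f w) (hg : AnalyticAt ℂ g w)
    (h : f =ᶠ[𝓝 w] g) : hf.order = hg.order := by
  rcases eq_or_ne hg.order ⊤ with ht | ht
  · rw [ht, hf.order_eq_top_iff]
    rw [hg.order_eq_top_iff] at ht
    filter_upwards [h, ht] with z hz hz'
    rw [hz, hz']
  · obtain ⟨n, hn⟩ := WithTop.ne_top_iff_exists.mp ht
    obtain ⟨q, hq1, hq2, hq3⟩ := (hg.order_eq_nat_iff n).mp hn.symm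
    rw [← hn]
    refine (hf.order_eq_nat_iff n).mpr ⟨q, hq1, hq2, ?_⟩
    filter_upwards [h, hq3] with z hz hz'
    rw [hz, hz']

lemma myorder_eq_zero {f : ℂ → ℂ} {w : ℂ} (hf : AnalyticAt ℂ f w) (h : f w ≠ 0) :
    hf.order = 0 := by
  refine (hf.order_eq_nat_iff 0).mpr ⟨f, hf, h, ?_⟩
  filter_upwards with z; simp

lemma myorder_mul {f g : ℂ → ℂ} {w : ℂ} (hf : AnalyticAt ℂ f w) (hg : AnalyticAt ℂ g w)
    (hfg : AnalyticAt ℂ (fun z => f z * g z) w) : hfg.order = hf.order + hg.order := by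
  rcases eq_or_ne hf.order ⊤ with ht | ht
  · rw [ht, top_add, hfg.order_eq_top_iff]
    rw [hf.order_eq_top_iff] at ht
    filter_upwards [ht] with z hz
    rw [hz, zero_mul]
  rcases eq_or_ne hg.order ⊤ with ht' | ht'
  · rw [ht', add_top, hfg.order_eq_top_iff]
    rw [hg.order_eq_top_iff] at ht'
    filter_upwards [ht'] with z hz
    rw [hz, mul_zero]
  obtain ⟨m, hm⟩ := WithTop.ne_top_iff_exists.mp ht
  obtain ⟨n, hn⟩ := WithTop.ne_top_iff_exists.mp ht'
  obtain ⟨q, hq1, hq2, hq3⟩ := (hf.order_eq_nat_iff m).mp hm.symm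
  obtain ⟨r, hr1, hr2, hr3⟩ := (hg.order_eq_nat_iff n).mp hn.symm
  have : hfg.order = ((m + n : ℕ) : ℕ∞) := by
    refine (hfg.order_eq_nat_iff (m + n)).mpr ⟨fun z => q z * r z, hq1.mul hr1,
      mul_ne_zero hq2 hr2, ?_⟩
    filter_upwards [hq3, hr3] with z hz hz'
    rw [hz, hz']
    simp only [smul_eq_mul, pow_add]
    ring
  rw [this, ← hm, ← hn]
  push_cast
  rfl

lemma myorder_conjComp {f : ℂ → ℂ} {a w : ℂ} (ha : a ≠ 0)
    (hf : AnalyticAt ℂ f (a * (starRingEnd ℂ) w))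
    (hg : AnalyticAt ℂ (fun z => (starRingEnd ℂ) (f (a * (starRingEnd ℂ) z))) w) :
    hg.order = hf.order := by
  have hcont : Filter.Tendsto (fun z : ℂ => a * (starRingEnd ℂ) z) (𝓝 w)
      (𝓝 (a * (starRingEnd ℂ) w)) := ((continuous_const.mul continuous_conj).tendsto w)
  rcases eq_or_ne hf.order ⊤ with ht | ht
  · rw [ht, hg.order_eq_top_iff]
    rw [hf.order_eq_top_iff] at ht
    filter_upwards [hcont.eventually ht] with z hz
    rw [hz, map_zero]
  · obtain ⟨n, hn⟩ := WithTop.ne_top_iff_exists.mp ht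
    obtain ⟨q, hq1, hq2, hq3⟩ := (hf.order_eq_nat_iff n).mp hn.symm
    rw [← hn]
    refine (hg.order_eq_nat_iff n).mpr
      ⟨fun z => ((starRingEnd ℂ) a) ^ n * (starRingEnd ℂ) (q (a * (starRingEnd ℂ) z)),
        (analyticAt_const.mul (analyticAt_conjComp hq1)), ?_, ?_⟩
    · exact mul_ne_zero (pow_ne_zero n (by simpa using ha)) (by simpa using hq2)
    · filter_upwards [hcont.eventually hq3] with z hz
      rw [hz]
      simp only [smul_eq_mul, map_mul, map_sub, map_pow, Complex.conj_conj]
      rw [show (starRingEnd ℂ) a * z - (starRingEnd ℂ) a * w = (starRingEnd ℂ) a * (z - w) by ring,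
        mul_pow]
      ring

lemma vanish_iff {f : ℂ → ℂ} {w : ℂ} (hf : AnalyticAt ℂ f w) (n : ℕ) :
    (∀ k ≤ n, iteratedDeriv k f w = 0) ↔ (n : ℕ∞) < hf.order := by
  obtain ⟨p, hp⟩ := id hf
  obtain ⟨r, hpr⟩ := id hp
  have hiter : ∀ k : ℕ, (iteratedDeriv k f w = 0 ↔ p k = 0) := by
    intro k
    rw [iteratedDeriv_eq_iteratedFDeriv, ← hpr.factorial_smul 1 k]
    have hcoeff : p k (fun _ => (1 : ℂ)) = p.coeff k := rfl
    rw [hcoeff, nsmul_eq_mul, mul_eq_zero]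
    simp only [Nat.cast_eq_zero, Nat.factorial_ne_zero, false_or]
    exact p.coeff_eq_zero
  by_cases hp0 : p = 0
  · have htop : hf.order = ⊤ := hf.order_eq_top_iff.mpr (hp.locally_zero_iff.mpr hp0)
    rw [htop]
    refine iff_of_true (fun k _ => (hiter k).mpr (by simp [hp0])) ?_
    exact WithTop.coe_lt_top n
  · have horder : hf.order = (p.order : ℕ∞) :=
      (hf.order_eq_nat_iff p.order).mpr ⟨(Function.swap dslope w)^[p.order] f,
        ⟨_, hp.has_fpower_series_iterate_dslope_fslope p.order⟩,
        hp.iterate_dslope_fslope_ne_zero hp0,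
          Filter.Eventually.of_forall hp.eq_pow_order_mul_iterate_dslope⟩
    rw [horder, Nat.cast_lt]
    constructor
    · intro h
      by_contra hle
      push_neg at hle
      exact p.apply_order_ne_zero hp0 ((hiter p.order).mp (h p.order hle))
    · intro h k hk
      exact (hiter k).mpr (p.apply_eq_zero_of_lt_order (lt_of_le_of_lt hk h))

lemma myorder_ne_top {f : ℂ → ℂ} {w : ℂ} (hf : AnalyticOnNhd ℂ f (ball (0:ℂ) 1))
    (hne : ∃ z ∈ ball (0:ℂ) 1, f z ≠ 0) (hw : w ∈ ball (0:ℂ) 1) : (hf w hw).order ≠ ⊤ := by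
  intro h
  obtain ⟨z, hz, hfz⟩ := hne
  exact hfz (hf.eqOn_zero_of_preconnected_of_eventuallyEq_zero
    (convex_ball (0:ℂ) 1).isPreconnected hw ((hf w hw).order_eq_top_iff.mp h) hz)

lemma eqOn_prod {f g : ℂ → ℂ} (hf : AnalyticOnNhd ℂ f (ball (0:ℂ) 1))
    (hg : AnalyticOnNhd ℂ g (ball (0:ℂ) 1))
    {a c : ℂ} (ha : ‖a‖ = 1) (hc : ‖c‖ = 1)
    (hfix : ∀ x : ℝ, a * (starRingEnd ℂ) (c * x) = c * x)
    (h : ∀ x : ℝ, x ∈ Set.Ioo (-1:ℝ) 1 → ‖f (c * x)‖ = ‖g (c * x)‖) :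
    Set.EqOn (fun z => f z * (starRingEnd ℂ) (f (a * (starRingEnd ℂ) z)))
      (fun z => g z * (starRingEnd ℂ) (g (a * (starRingEnd ℂ) z))) (ball (0:ℂ) 1) := by
  have hmem : ∀ w : ℂ, w ∈ ball (0:ℂ) 1 → a * (starRingEnd ℂ) w ∈ ball (0:ℂ) 1 := by
    intro w hw
    simp only [mem_ball, dist_zero_right] at hw ⊢
    rw [norm_mul, ha, one_mul, Complex.norm_conj]; exact hw
  have hFa : AnalyticOnNhd ℂ (fun z => f z * (starRingEnd ℂ) (f (a * (starRingEnd ℂ) z)))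
      (ball (0:ℂ) 1) := fun w hw => (hf w hw).mul (analyticAt_conjComp (hf _ (hmem w hw)))
  have hGa : AnalyticOnNhd ℂ (fun z => g z * (starRingEnd ℂ) (g (a * (starRingEnd ℂ) z)))
      (ball (0:ℂ) 1) := fun w hw => (hg w hw).mul (analyticAt_conjComp (hg _ (hmem w hw)))
  apply hFa.eqOn_of_preconnected_of_frequently_eq hGa (convex_ball (0:ℂ) 1).isPreconnected
    (mem_ball_self one_pos)
  have habs : ∀ x : ℝ, x ∈ Set.Ioo (-1:ℝ) 1 →
      f (c * x) * (starRingEnd ℂ) (f (a * (starRingEnd ℂ) (c * x)))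
        = g (c * x) * (starRingEnd ℂ) (g (a * (starRingEnd ℂ) (c * x))) := by
    intro x hx
    rw [hfix x, Complex.mul_conj, Complex.mul_conj, Complex.normSq_eq_norm_sq,
      Complex.normSq_eq_norm_sq, h x hx]
  have hx2 : ∀ m : ℕ, (0:ℝ) < 1/(m+2) := by
    intro m; positivity
  have hxlt : ∀ m : ℕ, (1:ℝ)/(m+2) < 1 := by
    intro m
    rw [div_lt_one (by positivity)]
    have : (0:ℝ) ≤ (m:ℝ) := Nat.cast_nonneg m
    linarith
  have hre : Tendsto (fun m : ℕ => (1:ℝ)/(m+2)) atTop (𝓝 0) := by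
    simp only [one_div]
    exact tendsto_inv_atTop_zero.comp
      (tendsto_atTop_add_const_right atTop 2 tendsto_natCast_atTop_atTop)
  have hten : Tendsto (fun m : ℕ => c * ((1:ℝ)/(m+2) : ℝ)) atTop (𝓝[≠] (0:ℂ)) := by
    apply tendsto_nhdsWithin_of_tendsto_nhds_of_eventually_within
    · have : Tendsto (fun m : ℕ => (((1:ℝ)/(m+2) : ℝ) : ℂ)) atTop (𝓝 (0:ℂ)) := by
        have := (Complex.continuous_ofReal.tendsto 0).comp hre
        simpa [Function.comp_def] using this
      simpa using this.const_mul c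
    · filter_upwards with m
      simp only [Set.mem_compl_iff, Set.mem_singleton_iff, mul_eq_zero, not_or]
      constructor
      · intro hc0; rw [hc0] at hc; simp at hc
      · exact Complex.ofReal_ne_zero.mpr (ne_of_gt (hx2 m))
  exact hten.frequently (Frequently.of_forall fun m =>
    habs _ ⟨by linarith [hx2 m], hxlt m⟩)


lemma enat_helper {x : ℕ∞} (hx : x ≠ ⊤) : ∃ p : ℕ, x = (p : ℕ∞) ∧ x.toNat = p := by
  obtain ⟨p, hp⟩ := WithTop.ne_top_iff_exists.mp hx
  exact ⟨p, hp.symm, by rw [← hp]; rfl⟩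

theorem stmt_16 (F G : ℂ → ℂ) (θ : ℝ) (hθ : Irrational (θ / Real.pi))
    (hF : DifferentiableOn ℂ F (Metric.ball (0 : ℂ) 1))
    (hG : DifferentiableOn ℂ G (Metric.ball (0 : ℂ) 1))
    (hF0 : ∃ w ∈ Metric.ball (0 : ℂ) 1, F w ≠ 0)
    (hG0 : ∃ w ∈ Metric.ball (0 : ℂ) 1, G w ≠ 0)
    (h1 : ∀ x : ℝ, x ∈ Set.Ioo (-1 : ℝ) 1 → ‖F x‖ = ‖G x‖)
    (h2 : ∀ x : ℝ, x ∈ Set.Ioo (-1 : ℝ) 1 →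
      ‖F (Complex.exp (θ * Complex.I) * x)‖ =
      ‖G (Complex.exp (θ * Complex.I) * x)‖) :
    ∀ w ∈ Metric.ball (0 : ℂ) 1, ∀ n : ℕ,
      ((∀ k ≤ n, iteratedDeriv k F w = 0) ↔ (∀ k ≤ n, iteratedDeriv k G w = 0)) := by
  classical
  have hFA : AnalyticOnNhd ℂ F (Metric.ball (0:ℂ) 1) :=
    fun w hw => hF.analyticAt (isOpen_ball.mem_nhds hw)
  have hGA : AnalyticOnNhd ℂ G (Metric.ball (0:ℂ) 1) :=
    fun w hw => hG.analyticAt (isOpen_ball.mem_nhds hw)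
  set e : ℂ := Complex.exp (θ * Complex.I) with he_def
  have he : ‖e‖ = 1 := Complex.norm_exp_ofReal_mul_I θ
  have he0 : e ≠ 0 := by
    intro h; rw [h] at he; simp at he
  have hmem : ∀ (a : ℂ), ‖a‖ = 1 → ∀ w ∈ Metric.ball (0:ℂ) 1,
      a * (starRingEnd ℂ) w ∈ Metric.ball (0:ℂ) 1 := by
    intro a ha w hw
    simp only [mem_ball, dist_zero_right] at hw ⊢
    rw [norm_mul, ha, one_mul, Complex.norm_conj]; exact hw
  -- the two identity-theorem equalities
  have heq1 : Set.EqOn (fun z => F z * (starRingEnd ℂ) (F ((1:ℂ) * (starRingEnd ℂ) z)))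
      (fun z => G z * (starRingEnd ℂ) (G ((1:ℂ) * (starRingEnd ℂ) z))) (ball (0:ℂ) 1) := by
    refine eqOn_prod hFA hGA (a := 1) (c := 1) (by simp) (by simp) ?_ ?_
    · intro x; simp [Complex.conj_ofReal]
    · intro x hx; rw [one_mul]; exact h1 x hx
  have hee : e * (starRingEnd ℂ) e = 1 := by
    rw [Complex.mul_conj, Complex.normSq_eq_norm_sq, he]; norm_num
  have heq2 : Set.EqOn (fun z => F z * (starRingEnd ℂ) (F ((e*e) * (starRingEnd ℂ) z)))
      (fun z => G z * (starRingEnd ℂ) (G ((e*e) * (starRingEnd ℂ) z))) (ball (0:ℂ) 1) := by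
    refine eqOn_prod hFA hGA (a := e*e) (c := e) (by simp [map_mul, he]) he ?_ ?_
    · intro x
      rw [map_mul, Complex.conj_ofReal]
      calc e*e*((starRingEnd ℂ) e * x) = e * (e * (starRingEnd ℂ) e) * x := by ring
      _ = e * x := by rw [hee]; ring
    · exact h2
  -- order functions
  set nF : ℂ → ℕ∞ := fun w =>
    if hw : w ∈ Metric.ball (0:ℂ) 1 then (hFA w hw).order else 0 with hnF_def
  set nG : ℂ → ℕ∞ := fun w =>
    if hw : w ∈ Metric.ball (0:ℂ) 1 then (hGA w hw).order else 0 with hnG_def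
  have hnF : ∀ w (hw : w ∈ Metric.ball (0:ℂ) 1), nF w = (hFA w hw).order :=
    fun w hw => dif_pos hw
  have hnG : ∀ w (hw : w ∈ Metric.ball (0:ℂ) 1), nG w = (hGA w hw).order :=
    fun w hw => dif_pos hw
  have hfinF : ∀ w (hw : w ∈ Metric.ball (0:ℂ) 1), nF w ≠ ⊤ := by
    intro w hw; rw [hnF w hw]; exact myorder_ne_top hFA hF0 hw
  have hfinG : ∀ w (hw : w ∈ Metric.ball (0:ℂ) 1), nG w ≠ ⊤ := by
    intro w hw; rw [hnG w hw]; exact myorder_ne_top hGA hG0 hw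
  -- key order equation
  have key : ∀ (a : ℂ), a ≠ 0 → (‖a‖ = 1) →
      Set.EqOn (fun z => F z * (starRingEnd ℂ) (F (a * (starRingEnd ℂ) z)))
        (fun z => G z * (starRingEnd ℂ) (G (a * (starRingEnd ℂ) z))) (ball (0:ℂ) 1) →
      ∀ w ∈ Metric.ball (0:ℂ) 1,
        nF w + nF (a * (starRingEnd ℂ) w) = nG w + nG (a * (starRingEnd ℂ) w) := by
    intro a ha0 ha hEq w hw
    have hw' : a * (starRingEnd ℂ) w ∈ Metric.ball (0:ℂ) 1 := hmem a ha w hw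
    have hFw := hFA w hw
    have hFc := hFA _ hw'
    have hGw := hGA w hw
    have hGc := hGA _ hw'
    have hFcc := analyticAt_conjComp hFc
    have hGcc := analyticAt_conjComp hGc
    have hphiF : AnalyticAt ℂ (fun z => F z * (starRingEnd ℂ) (F (a * (starRingEnd ℂ) z))) w :=
      hFw.mul hFcc
    have hphiG : AnalyticAt ℂ (fun z => G z * (starRingEnd ℂ) (G (a * (starRingEnd ℂ) z))) w :=
      hGw.mul hGcc
    have h0 : hphiF.order = hphiG.order :=
      myorder_congr hphiF hphiG (Filter.eventuallyEq_of_mem (isOpen_ball.mem_nhds hw) hEq)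
    rw [myorder_mul hFw hFcc hphiF, myorder_mul hGw hGcc hphiG,
      myorder_conjComp ha0 hFc hFcc, myorder_conjComp ha0 hGc hGcc] at h0
    rw [hnF w hw, hnF _ hw', hnG w hw, hnG _ hw']
    exact h0
  -- integer differences
  set dd : ℂ → ℤ := fun w => ((nF w).toNat : ℤ) - ((nG w).toNat : ℤ) with hdd_def
  have keyZ : ∀ (a : ℂ), a ≠ 0 → (‖a‖ = 1) →
      Set.EqOn (fun z => F z * (starRingEnd ℂ) (F (a * (starRingEnd ℂ) z)))
        (fun z => G z * (starRingEnd ℂ) (G (a * (starRingEnd ℂ) z))) (ball (0:ℂ) 1) →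
      ∀ w ∈ Metric.ball (0:ℂ) 1, dd (a * (starRingEnd ℂ) w) = - dd w := by
    intro a ha0 ha hEq w hw
    have hw' : a * (starRingEnd ℂ) w ∈ Metric.ball (0:ℂ) 1 := hmem a ha w hw
    have hk := key a ha0 ha hEq w hw
    obtain ⟨p1, hp1, ht1⟩ := enat_helper (hfinF w hw)
    obtain ⟨p2, hp2, ht2⟩ := enat_helper (hfinF _ hw')
    obtain ⟨p3, hp3, ht3⟩ := enat_helper (hfinG w hw)
    obtain ⟨p4, hp4, ht4⟩ := enat_helper (hfinG _ hw')
    rw [hp1, hp2, hp3, hp4] at hk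
    have hknat : p1 + p2 = p3 + p4 := by exact_mod_cast hk
    simp only [hdd_def, ht1, ht2, ht3, ht4]
    omega
  have hconjmem : ∀ w ∈ Metric.ball (0:ℂ) 1, (starRingEnd ℂ) w ∈ Metric.ball (0:ℂ) 1 := by
    intro w hw
    have := hmem 1 (by simp) w hw
    rwa [one_mul] at this
  have hkey1 : ∀ w ∈ Metric.ball (0:ℂ) 1, dd ((starRingEnd ℂ) w) = - dd w := by
    intro w hw
    have := keyZ 1 one_ne_zero (by simp) heq1 w hw
    rwa [one_mul] at this
  have hkey2 : ∀ w ∈ Metric.ball (0:ℂ) 1, dd ((e*e) * (starRingEnd ℂ) w) = - dd w :=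
    keyZ (e*e) (mul_ne_zero he0 he0) (by simp [map_mul, he]) heq2
  have hrot : ∀ w ∈ Metric.ball (0:ℂ) 1, dd (e*e*w) = dd w := by
    intro w hw
    have hcw : (starRingEnd ℂ) w ∈ Metric.ball (0:ℂ) 1 := hconjmem w hw
    have h2' := hkey2 _ hcw
    rw [Complex.conj_conj] at h2'
    rw [h2', hkey1 w hw, neg_neg]
  -- main claim: orders agree
  have horder_eq : ∀ w (hw : w ∈ Metric.ball (0:ℂ) 1), (hFA w hw).order = (hGA w hw).order := by
    intro w hw
    by_contra hne
    have hdd0 : dd w ≠ 0 := by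
      intro h0
      obtain ⟨p1, hp1, ht1⟩ := enat_helper (hfinF w hw)
      obtain ⟨p3, hp3, ht3⟩ := enat_helper (hfinG w hw)
      simp only [hdd_def, ht1, ht3] at h0
      have hpp : p1 = p3 := by omega
      apply hne
      rw [← hnF w hw, ← hnG w hw, hp1, hp3, hpp]
    have hw0 : w ≠ 0 := by
      intro h0
      apply hdd0
      have := hkey1 w hw
      rw [h0] at this ⊢
      rw [map_zero] at this
      omega
    -- the orbit
    set u : ℕ → ℂ := fun k => (e*e)^k * w with hu_def
    have hu_abs : ∀ k, ‖u k‖ = ‖w‖ := by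
      intro k
      simp [hu_def, map_mul, map_pow, he]
    have hu_mem : ∀ k, u k ∈ Metric.ball (0:ℂ) 1 := by
      intro k
      simp only [mem_ball, dist_zero_right, hu_abs k]
      simpa [mem_ball, dist_zero_right] using hw
    have hu_dd : ∀ k, dd (u k) = dd w := by
      intro k
      induction k with
      | zero => simp [hu_def]
      | succ k ih =>
        have : u (k+1) = e*e*(u k) := by
          simp only [hu_def]; ring
        rw [this, hrot (u k) (hu_mem k), ih]
    -- injectivity
    have hroot : ∀ m : ℕ, m ≠ 0 → (e*e)^m ≠ 1 := by
      intro m hm h1'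
      have hexp : Complex.exp (((2*m*θ : ℝ) : ℂ) * Complex.I) = 1 := by
        rw [← h1', he_def, ← Complex.exp_add, ← Complex.exp_nat_mul]
        congr 1
        push_cast
        ring
      obtain ⟨ℓ, hℓ⟩ := Complex.exp_eq_one_iff.mp hexp
      have hreal : (2*m*θ : ℝ) = ℓ * (2*Real.pi) := by
        have h' : ((2*m*θ : ℝ) : ℂ) * Complex.I = ((ℓ * (2*Real.pi) : ℝ) : ℂ) * Complex.I := by
          rw [hℓ]; push_cast; ring
        have := mul_right_cancel₀ Complex.I_ne_zero h'
        exact_mod_cast this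
      apply hθ
      refine ⟨(ℓ : ℚ) / (m : ℚ), ?_⟩
      have hm' : (m:ℝ) ≠ 0 := Nat.cast_ne_zero.mpr hm
      have hπ : Real.pi ≠ 0 := Real.pi_ne_zero
      push_cast
      rw [div_eq_div_iff hm' hπ]
      nlinarith [hreal]
    have hu_inj : Function.Injective u := by
      intro j k hjk
      simp only [hu_def] at hjk
      have hpow : (e*e)^j = (e*e)^k := mul_right_cancel₀ hw0 hjk
      have hne2 : e*e ≠ 0 := mul_ne_zero he0 he0
      rcases le_total j k with h | h
      · have : (e*e)^j * (e*e)^(k-j) = (e*e)^j * 1 := by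
          rw [mul_one, ← pow_add]
          rw [hpow]
          congr 1
          omega
        have h3 := mul_left_cancel₀ (pow_ne_zero j hne2) this
        have := hroot (k - j)
        by_contra hne3
        exact (hroot (k-j) (by omega)) h3
      · have : (e*e)^k * (e*e)^(j-k) = (e*e)^k * 1 := by
          rw [mul_one, ← pow_add]
          rw [← hpow]
          congr 1
          omega
        have h3 := mul_left_cancel₀ (pow_ne_zero k hne2) this
        by_contra hne3
        exact (hroot (j-k) (by omega)) h3
    -- zeros of the product along the orbit
    have hH : AnalyticOnNhd ℂ (fun z => F z * G z) (Metric.ball (0:ℂ) 1) :=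
      fun z hz => (hFA z hz).mul (hGA z hz)
    have hHzero : ∀ k, F (u k) * G (u k) = 0 := by
      intro k
      by_contra hne'
      obtain ⟨hFne, hGne⟩ := mul_ne_zero_iff.mp hne'
      have hoF : (hFA _ (hu_mem k)).order = 0 := myorder_eq_zero _ hFne
      have hoG : (hGA _ (hu_mem k)).order = 0 := myorder_eq_zero _ hGne
      apply hdd0
      rw [← hu_dd k]
      simp only [hdd_def, hnF _ (hu_mem k), hnG _ (hu_mem k), hoF, hoG]
      rfl
    -- accumulation point
    have hsub : ∀ k, u k ∈ Metric.sphere (0:ℂ) (‖w‖) := by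
      intro k
      simp [mem_sphere, dist_zero_right, hu_abs k]
    obtain ⟨zs, hzs_mem, φ, hφmono, hφten⟩ :=
      (isCompact_sphere (0:ℂ) (‖w‖)).tendsto_subseq hsub
    have hzs_ball : zs ∈ Metric.ball (0:ℂ) 1 := by
      simp only [mem_sphere_iff_norm, sub_zero] at hzs_mem
      simp only [mem_ball, dist_zero_right]
      rw [hzs_mem]
      simpa [mem_ball, dist_zero_right] using hw
    have hev : ∀ᶠ k in atTop, u (φ k) ≠ zs := by
      by_cases hex : ∃ k0, u (φ k0) = zs
      · obtain ⟨k0, hk0⟩ := hex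
        filter_upwards [eventually_gt_atTop k0] with k hk
        intro hzz
        have : φ k = φ k0 := hu_inj (hzz.trans hk0.symm)
        have := hφmono.injective this
        omega
      · push_neg at hex
        filter_upwards with k using hex k
    have hten' : Tendsto (fun k => u (φ k)) atTop (𝓝[≠] zs) :=
      tendsto_nhdsWithin_of_tendsto_nhds_of_eventually_within _ hφten
        (hev.mono fun k hk => hk)
    have hfreq : ∃ᶠ z in 𝓝[≠] zs, F z * G z = 0 :=
      hten'.frequently (Frequently.of_forall fun k => hHzero (φ k))
    have hall : Set.EqOn (fun z => F z * G z) 0 (Metric.ball (0:ℂ) 1) :=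
      hH.eqOn_zero_of_preconnected_of_frequently_eq_zero
        (convex_ball (0:ℂ) 1).isPreconnected hzs_ball hfreq
    -- contradiction with finite order at w
    have hHw : AnalyticAt ℂ (fun z => F z * G z) w := hH w hw
    have htop : hHw.order = ⊤ := by
      rw [hHw.order_eq_top_iff]
      filter_upwards [isOpen_ball.mem_nhds hw] with z hz
      exact hall hz
    rw [myorder_mul (hFA w hw) (hGA w hw) hHw] at htop
    exact WithTop.add_ne_top.mpr ⟨by rw [← hnF w hw]; exact hfinF w hw,
      by rw [← hnG w hw]; exact hfinG w hw⟩ htop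
  intro w hw n
  rw [vanish_iff (hFA w hw) n, vanish_iff (hGA w hw) n, horder_eq w hw]
end
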